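/- With the setup of the successive construction (b_i orthonormal, a₁ = e₁, a_i = U_{i−1}···U₁e_i, each U_i unitary with U_i a_i = b_i acting as identity outside span{a_i, b_i}), if additionally ⟨b_j, e_i⟩ = 0 for all j < i ≤ n, then a_i = e_i for all i. -/

import Mathlib

/-- The composition `U (k-1) ∘ ⋯ ∘ U 1 ∘ U 0` of the first `k` unitaries. -/
noncomputable def prodUpTo {E : Type*} [NormedAddCommGroup E] [InnerProductSpace ℂ E]
    (U : ℕ → (E ≃ₗᵢ[ℂ] E)) : ℕ → (E ≃ₗᵢ[ℂ] E)
  | 0 => LinearIsometryEquiv.refl ℂ E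
  | (k + 1) => (prodUpTo U k).trans (U k)

theorem stmt11 {E : Type*} [NormedAddCommGroup E] [InnerProductSpace ℂ E]
    (n : ℕ) (e b : ℕ → E) (U : ℕ → (E ≃ₗᵢ[ℂ] E))
    (he : ∀ i k, i < n → k < n → (inner ℂ (e i) (e k) : ℂ) = if i = k then 1 else 0)
    (hbo : ∀ i k, i < n → k < n → (inner ℂ (b i) (b k) : ℂ) = if i = k then 1 else 0)
    (hmap : ∀ i, i < n → U i (prodUpTo U i (e i)) = b i)
    (hid : ∀ i, i < n → ∀ x : E,
      (inner ℂ (prodUpTo U i (e i)) x : ℂ) = 0 → (inner ℂ (b i) x : ℂ) = 0 → U i x = x)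
    (htri : ∀ j i, j < i → i < n → (inner ℂ (b j) (e i) : ℂ) = 0) :
    ∀ i, i < n → prodUpTo U i (e i) = e i := by
  have key : ∀ k i, k ≤ i → i < n → prodUpTo U k (e i) = e i := by
    intro k
    induction k with
    | zero => intro i _ _; rfl
    | succ k ih =>
      intro i hki hin
      have hki' : k < i := hki
      have hkn : k < n := lt_trans hki' hin
      have h1 : prodUpTo U k (e i) = e i := ih i (le_of_lt hki') hin
      have h2 : prodUpTo U k (e k) = e k := ih k le_rfl hkn
      show U k (prodUpTo U k (e i)) = e i
      rw [h1]
      apply hid k hkn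
      · rw [h2, he k i hkn hin, if_neg (Nat.ne_of_lt hki')]
      · exact htri k i hki' hin
  intro i hin
  exact key i i le_rfl hin
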